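/- Fix n ≥ 2. Let R be the 4×4 complex matrix which, in the ordered basis |11⟩,|21⟩,|12⟩,|22⟩ of ℂ²⊗ℂ², has diagonal blocks α, [[a,b],[c,d]], β (i.e., R|11⟩=α|11⟩, R|22⟩=β|22⟩, and R preserves span{|21⟩,|12⟩} with matrix [[a,b],[c,d]]). Let X = diag(w,x,y,z) be invertible diagonal and S := X * R * X⁻¹. For 1 ≤ i ≤ n define the 2×2 matrix A(i) := diag((y/x)^{n−i}, 1), and let A := A(1) ⊗ₖ A(2) ⊗ₖ ⋯ ⊗ₖ A(n), a diagonal matrix on (ℂ²)^{⊗n}. Then for every 1 ≤ i ≤ n−1, A * Rᵢ * A⁻¹ = Sᵢ, where Rᵢ = 1₂^{⊗(i−1)} ⊗ₖ R ⊗ₖ 1₂^{⊗(n−i−1)} and Sᵢ = 1₂^{⊗(i−1)} ⊗ₖ S ⊗ₖ 1₂^{⊗(n−i−1)}. (Hence X-symmetry is implemented by a natural isomorphism for N = 2.) -/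

import Mathlib

open Matrix Kronecker

/-- The image `ρₙᴿ(σᵢ)` of the Artin braid generator acting at (0-based)
positions `i, i+1` of `(ℂ^N)^{⊗ n}`, the tensor power being indexed by
functions `Fin n → Fin N`. -/
def braidGen {N : ℕ} (R : Matrix (Fin N × Fin N) (Fin N × Fin N) ℂ)
    (n : ℕ) (i : Fin n) (h : (i : ℕ) + 1 < n) :
    Matrix (Fin n → Fin N) (Fin n → Fin N) ℂ :=
  Matrix.of fun v w =>
    R (v i, v ⟨(i : ℕ) + 1, h⟩) (w i, w ⟨(i : ℕ) + 1, h⟩) *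
      ∏ k ∈ Finset.univ.filter
          (fun k : Fin n => (k : ℕ) ≠ (i : ℕ) ∧ (k : ℕ) ≠ (i : ℕ) + 1),
        (if v k = w k then (1 : ℂ) else 0)

/-- The charge conserving `4 × 4` matrix with diagonal blocks `α`,
`[[a,b],[c,d]]`, `β` in the ordered basis `|11⟩, |21⟩, |12⟩, |22⟩` of
`ℂ² ⊗ ℂ²` (indexed by `Fin 2 × Fin 2`). -/
def ccMat2 (α β a b c d : ℂ) : Matrix (Fin 2 × Fin 2) (Fin 2 × Fin 2) ℂ :=
  Matrix.of fun p q =>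
    if p = ((0, 0) : Fin 2 × Fin 2) ∧ q = ((0, 0) : Fin 2 × Fin 2) then α else
    if p = ((1, 1) : Fin 2 × Fin 2) ∧ q = ((1, 1) : Fin 2 × Fin 2) then β else
    if p = ((1, 0) : Fin 2 × Fin 2) ∧ q = ((1, 0) : Fin 2 × Fin 2) then a else
    if p = ((1, 0) : Fin 2 × Fin 2) ∧ q = ((0, 1) : Fin 2 × Fin 2) then b else
    if p = ((0, 1) : Fin 2 × Fin 2) ∧ q = ((1, 0) : Fin 2 × Fin 2) then c else
    if p = ((0, 1) : Fin 2 × Fin 2) ∧ q = ((0, 1) : Fin 2 × Fin 2) then d else 0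

/-- `diag(w,x,y,z)` in the ordered basis `|11⟩, |21⟩, |12⟩, |22⟩`. -/
def diag4 (w x y z : ℂ) : Matrix (Fin 2 × Fin 2) (Fin 2 × Fin 2) ℂ :=
  Matrix.diagonal fun p =>
    if p = ((0, 0) : Fin 2 × Fin 2) then w else
    if p = ((1, 0) : Fin 2 × Fin 2) then x else
    if p = ((0, 1) : Fin 2 × Fin 2) then y else z

/-- `A = A(1) ⊗ₖ ⋯ ⊗ₖ A(n)` where `A(i) = diag((y/x)^{n-i}, 1)` (1-based `i`),
a diagonal matrix on `(ℂ²)^{⊗ n}`. -/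
noncomputable def Amat (x y : ℂ) (n : ℕ) : Matrix (Fin n → Fin 2) (Fin n → Fin 2) ℂ :=
  Matrix.of fun v w =>
    ∏ k : Fin n,
      (if v k = w k then (if v k = 0 then (y / x) ^ (n - 1 - (k : ℕ)) else 1) else 0)

set_option maxHeartbeats 2000000 in
lemma fin2_cases (a : Fin 2) : a = 0 ∨ a = 1 := by omega

set_option maxHeartbeats 2000000 in
/-- for a charge conserving `4 × 4` matrix `R`, `X = diag(w,x,y,z)`
invertible diagonal and `S = X R X⁻¹`, the diagonal matrix
`A = A(1) ⊗ₖ ⋯ ⊗ₖ A(n)` with `A(i) = diag((y/x)^{n-i}, 1)` satisfies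
`A Rᵢ A⁻¹ = Sᵢ` for all `1 ≤ i ≤ n - 1`. -/
theorem x_symmetry_rank2 (n : ℕ) (hn : 2 ≤ n) (α β a b c d w x y z : ℂ)
    (hw : w ≠ 0) (hx : x ≠ 0) (hy : y ≠ 0) (hz : z ≠ 0) :
    IsUnit (Amat x y n) ∧
      ∀ (i : Fin n) (h : (i : ℕ) + 1 < n),
        Amat x y n * braidGen (ccMat2 α β a b c d) n i h * (Amat x y n)⁻¹
          = braidGen (diag4 w x y z * ccMat2 α β a b c d * (diag4 w x y z)⁻¹) n i h := by
  have ht : y / x ≠ 0 := div_ne_zero hy hx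
  set F : (Fin n → Fin 2) → Fin n → ℂ :=
    fun v k => if v k = 0 then (y / x) ^ (n - 1 - (k : ℕ)) else 1 with hF
  set D : (Fin n → Fin 2) → ℂ := fun v => ∏ k : Fin n, F v k with hD
  have hFne : ∀ v k, F v k ≠ 0 := by
    intro v k
    simp only [hF]
    split
    · exact pow_ne_zero _ ht
    · exact one_ne_zero
  have hDne : ∀ v, D v ≠ 0 := fun v =>
    Finset.prod_ne_zero_iff.mpr fun k _ => hFne v k
  have hAd : Amat x y n = Matrix.diagonal D := by
    ext v u
    by_cases hvw : v = u
    · subst hvw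
      simp [Amat, Matrix.diagonal, hF, hD]
    · rw [Matrix.diagonal_apply_ne _ hvw]
      obtain ⟨k, hk⟩ := Function.ne_iff.mp hvw
      exact Finset.prod_eq_zero (Finset.mem_univ k) (if_neg hk)
  have hunit : IsUnit (Amat x y n) := by
    rw [hAd, Matrix.isUnit_diagonal]
    exact IsUnit.of_mul_eq_one (a := D) (fun v => (D v)⁻¹)
      (funext fun v => mul_inv_cancel₀ (hDne v))
  refine ⟨hunit, ?_⟩
  intro i h
  obtain ⟨iA⟩ := hunit.nonempty_invertible
  have hinv2 : (diag4 w x y z)⁻¹ = diag4 w⁻¹ x⁻¹ y⁻¹ z⁻¹ := by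
    apply Matrix.inv_eq_right_inv
    simp only [diag4, Matrix.diagonal_mul_diagonal]
    ext ⟨p1, p2⟩ ⟨q1, q2⟩
    rcases fin2_cases p1 with h1 | h1 <;> rcases fin2_cases p2 with h2 | h2 <;>
      rcases fin2_cases q1 with h3 | h3 <;> rcases fin2_cases q2 with h4 | h4 <;>
      simp [h1, h2, h3, h4, Matrix.diagonal_apply, Matrix.one_apply, Prod.ext_iff] <;>
      field_simp
  rw [hinv2, Matrix.mul_inv_eq_iff_eq_mul_of_invertible, hAd]
  ext v u
  set i1 : Fin n := ⟨(i : ℕ) + 1, h⟩ with hi1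
  rw [Matrix.diagonal_mul, Matrix.mul_diagonal]
  simp only [braidGen, diag4, ccMat2, Matrix.of_apply, Matrix.mul_diagonal,
    Matrix.diagonal_mul]
  set P : ℂ := ∏ k ∈ Finset.univ.filter
      (fun k : Fin n => (k : ℕ) ≠ (i : ℕ) ∧ (k : ℕ) ≠ (i : ℕ) + 1),
    (if v k = u k then (1 : ℂ) else 0) with hP
  by_cases hP0 : P = 0
  · rw [hP0]; ring
  have hvu : ∀ k ∈ Finset.univ.filter
      (fun k : Fin n => (k : ℕ) ≠ (i : ℕ) ∧ (k : ℕ) ≠ (i : ℕ) + 1), v k = u k := by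
    intro k hk
    by_contra hne
    exact hP0 (Finset.prod_eq_zero hk (if_neg hne))
  have hP1 : P = 1 := Finset.prod_eq_one fun k hk => if_pos (hvu k hk)
  have hfilter : (Finset.univ.filter
      (fun k : Fin n => (k : ℕ) ≠ (i : ℕ) ∧ (k : ℕ) ≠ (i : ℕ) + 1))
      = (Finset.univ.erase i).erase i1 := by
    ext k
    simp only [Finset.mem_filter, Finset.mem_univ, true_and, Finset.mem_erase,
      Fin.ext_iff, hi1, Fin.val_mk]
    constructor
    · rintro ⟨h1, h2⟩
      exact ⟨fun hk => h2 (by rw [hk]), fun hk => h1 (by rw [hk]), trivial⟩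
    · rintro ⟨h1, h2, -⟩
      exact ⟨fun hk => h2 (Fin.ext hk), fun hk => h1 (Fin.ext hk)⟩
  have hi1i : i1 ≠ i := by
    simp [Fin.ext_iff, hi1]
  have hsplit : ∀ vv : Fin n → Fin 2, D vv = F vv i * F vv i1 *
      ∏ k ∈ (Finset.univ.filter
        (fun k : Fin n => (k : ℕ) ≠ (i : ℕ) ∧ (k : ℕ) ≠ (i : ℕ) + 1)), F vv k := by
    intro vv
    rw [hfilter]
    simp only [hD]
    rw [← Finset.mul_prod_erase Finset.univ (F vv) (Finset.mem_univ i),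
      ← Finset.mul_prod_erase _ (F vv) (Finset.mem_erase.mpr ⟨hi1i, Finset.mem_univ i1⟩)]
    ring
  set Q : ℂ := ∏ k ∈ (Finset.univ.filter
      (fun k : Fin n => (k : ℕ) ≠ (i : ℕ) ∧ (k : ℕ) ≠ (i : ℕ) + 1)), F v k with hQ
  have hQu : (∏ k ∈ (Finset.univ.filter
      (fun k : Fin n => (k : ℕ) ≠ (i : ℕ) ∧ (k : ℕ) ≠ (i : ℕ) + 1)), F u k) = Q :=
    (Finset.prod_congr rfl fun k hk => by simp [hF, hvu k hk]).symm
  have hQne : Q ≠ 0 := Finset.prod_ne_zero_iff.mpr fun k _ => hFne v k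
  have he : n - 1 - (i : ℕ) = (n - 1 - ((i : ℕ) + 1)) + 1 := by omega
  rw [hsplit v, hsplit u, hQu, hP1, ← hQ]
  have hvI : v i1 = v ⟨(i : ℕ) + 1, h⟩ := rfl
  have huI : u i1 = u ⟨(i : ℕ) + 1, h⟩ := rfl
  rw [← hvI, ← huI]
  have hFv : ∀ (vv : Fin n → Fin 2), F vv i = if vv i = 0 then (y / x) ^ (n - 1 - (i : ℕ)) else 1 := fun _ => rfl
  have hFv1 : ∀ (vv : Fin n → Fin 2), F vv i1 = if vv i1 = 0 then (y / x) ^ (n - 1 - ((i : ℕ) + 1)) else 1 := fun _ => rfl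
  rcases fin2_cases (v i) with hvi | hvi <;> rcases fin2_cases (v i1) with hvi1 | hvi1 <;>
    rcases fin2_cases (u i) with hui | hui <;> rcases fin2_cases (u i1) with hui1 | hui1 <;>
    simp only [hFv, hFv1, hvi, hvi1, hui, hui1, he, pow_succ, Prod.mk.injEq,
      if_true, if_false, reduceIte, Prod.ext_iff] <;>
    norm_num <;>
    field_simp <;>
    ring
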